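/- Let f : [0, π] → [0, π] be defined by f(θ) = arccos((sin θ + (π − θ)·cos θ)/π). For any initial angle θ⁰ ∈ (0, π), the sequence defined by θ^{ℓ+1} = f(θ^ℓ) is strictly decreasing and converges to 0 as ℓ → ∞. -/

import Mathlib

open Real Filter

/-- The infinite width angle update map `f(θ) = arccos((sin θ + (π − θ)·cos θ)/π)`,
mapping `[0, π]` to `[0, π]`. -/
noncomputable def infWidthMap (θ : ℝ) : ℝ :=
  Real.arccos ((Real.sin θ + (π - θ) * Real.cos θ) / π)

lemma aux_sin_gt (θ : ℝ) (h : θ ∈ Set.Ioo (0:ℝ) π) : θ * Real.cos θ < Real.sin θ := by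
  have hF : ∀ x : ℝ, HasDerivAt (fun t => Real.sin t - t * Real.cos t) (x * Real.sin x) x := by
    intro x
    have h1 := Real.hasDerivAt_sin x
    have h2 : HasDerivAt (fun t => t * Real.cos t) (1 * Real.cos x + x * (-Real.sin x)) x :=
      (hasDerivAt_id x).mul (Real.hasDerivAt_cos x)
    have : HasDerivAt (fun t => Real.sin t - t * Real.cos t) _ x := h1.sub h2
    convert this using 1; ring
  have hmono : StrictMonoOn (fun t => Real.sin t - t * Real.cos t) (Set.Icc 0 π) := by
    apply strictMonoOn_of_deriv_pos (convex_Icc 0 π)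
    · exact ((Real.continuous_sin.sub (continuous_id.mul Real.continuous_cos))).continuousOn
    · intro x hx
      rw [interior_Icc] at hx
      rw [(hF x).deriv]
      exact mul_pos hx.1 (Real.sin_pos_of_pos_of_lt_pi hx.1 hx.2)
  have := hmono (Set.left_mem_Icc.mpr Real.pi_pos.le)
    ⟨h.1.le, h.2.le⟩ h.1
  simpa using this

lemma aux_lt_pi (θ : ℝ) (h : θ ∈ Set.Ioo (0:ℝ) π) :
    Real.sin θ + (π - θ) * Real.cos θ < π := by
  have hF : ∀ x : ℝ, HasDerivAt (fun t => Real.sin t + (π - t) * Real.cos t)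
      (-((π - x) * Real.sin x)) x := by
    intro x
    have h1 := Real.hasDerivAt_sin x
    have h2 : HasDerivAt (fun t => (π - t) * Real.cos t)
        ((0 - 1) * Real.cos x + (π - x) * (-Real.sin x)) x :=
      ((hasDerivAt_const x π).sub (hasDerivAt_id x)).mul (Real.hasDerivAt_cos x)
    have : HasDerivAt (fun t => Real.sin t + (π - t) * Real.cos t) _ x := h1.add h2
    convert this using 1; ring
  have hanti : StrictAntiOn (fun t => Real.sin t + (π - t) * Real.cos t) (Set.Icc 0 π) := by
    apply strictAntiOn_of_deriv_neg (convex_Icc 0 π)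
    · exact (Real.continuous_sin.add ((continuous_const.sub continuous_id).mul
        Real.continuous_cos)).continuousOn
    · intro x hx
      rw [interior_Icc] at hx
      rw [(hF x).deriv]
      have : 0 < (π - x) * Real.sin x :=
        mul_pos (by linarith [hx.2]) (Real.sin_pos_of_pos_of_lt_pi hx.1 hx.2)
      linarith
  have := hanti (Set.left_mem_Icc.mpr Real.pi_pos.le) ⟨h.1.le, h.2.le⟩ h.1
  simpa using this

lemma infWidthMap_mem (θ : ℝ) (h : θ ∈ Set.Ioo (0:ℝ) π) :
    infWidthMap θ ∈ Set.Ioo (0:ℝ) θ := by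
  have hπ := Real.pi_pos
  set g := (Real.sin θ + (π - θ) * Real.cos θ) / π with hg
  have hg1 : g < 1 := (div_lt_one hπ).mpr (by simpa using aux_lt_pi θ h)
  have hgc : Real.cos θ < g := by
    rw [hg, lt_div_iff₀ hπ]
    have := aux_sin_gt θ h
    nlinarith
  have hcos_mem : Real.cos θ ∈ Set.Icc (-1:ℝ) 1 := ⟨Real.neg_one_le_cos θ, Real.cos_le_one θ⟩
  have hgmem : g ∈ Set.Icc (-1:ℝ) 1 := ⟨le_of_lt (lt_of_le_of_lt hcos_mem.1 hgc), hg1.le⟩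
  constructor
  · exact Real.arccos_pos.mpr hg1
  · have := Real.strictAntiOn_arccos hcos_mem hgmem hgc
    rwa [Real.arccos_cos h.1.le h.2.le] at this

/-- For any initial angle `θ⁰ ∈ (0, π)`, the sequence defined by `θ^{ℓ+1} = f(θ^ℓ)`,
where `f` is the infinite width angle update map, is strictly decreasing and converges
to `0` as `ℓ → ∞`. -/
theorem infWidthMap_iterates_tendsto_zero (θ0 : ℝ) (hθ0 : θ0 ∈ Set.Ioo (0 : ℝ) π) :
    StrictAnti (fun ℓ : ℕ => infWidthMap^[ℓ] θ0) ∧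
    Tendsto (fun ℓ : ℕ => infWidthMap^[ℓ] θ0) atTop (nhds 0) := by
  set x : ℕ → ℝ := fun ℓ => infWidthMap^[ℓ] θ0 with hx
  have hmem : ∀ n, x n ∈ Set.Ioo (0:ℝ) π := by
    intro n
    induction n with
    | zero => simpa [hx] using hθ0
    | succ k ih =>
      have hstep : x (k+1) = infWidthMap (x k) := by
        simp [hx, Function.iterate_succ_apply']
      rw [hstep]
      have := infWidthMap_mem _ ih
      exact ⟨this.1, this.2.trans ih.2⟩
  have hlt : ∀ n, x (n+1) < x n := by
    intro n
    have hstep : x (n+1) = infWidthMap (x n) := by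
      simp [hx, Function.iterate_succ_apply']
    rw [hstep]
    exact (infWidthMap_mem _ (hmem n)).2
  have hanti : StrictAnti x := strictAnti_nat_of_succ_lt hlt
  refine ⟨hanti, ?_⟩
  have hbdd : BddBelow (Set.range x) := ⟨0, by rintro y ⟨n, rfl⟩; exact (hmem n).1.le⟩
  have htend : Tendsto x atTop (nhds (⨅ n, x n)) :=
    tendsto_atTop_ciInf hanti.antitone hbdd
  set L := ⨅ n, x n with hL
  have hL0 : 0 ≤ L := le_ciInf fun n => (hmem n).1.le
  have hLθ0 : L < π := lt_of_le_of_lt (ciInf_le hbdd 0) (by simpa [hx] using hθ0.2)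
  have hcont : Continuous infWidthMap := by
    unfold infWidthMap
    exact Real.continuous_arccos.comp
      (((Real.continuous_sin.add ((continuous_const.sub continuous_id).mul
        Real.continuous_cos))).div_const π)
  have hfix : infWidthMap L = L := by
    have h1 : Tendsto (fun n => infWidthMap (x n)) atTop (nhds (infWidthMap L)) :=
      (hcont.tendsto L).comp htend
    have h2 : Tendsto (fun n => x (n+1)) atTop (nhds L) :=
      htend.comp (tendsto_add_atTop_nat 1)
    have heq : (fun n => infWidthMap (x n)) = fun n => x (n+1) := by
      funext n; simp [hx, Function.iterate_succ_apply']
    rw [heq] at h1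
    exact tendsto_nhds_unique h1 h2
  rcases eq_or_lt_of_le hL0 with h0 | h0
  · rwa [← h0] at htend
  · exfalso
    have := (infWidthMap_mem L ⟨h0, hLθ0⟩).2
    rw [hfix] at this
    exact lt_irrefl _ this
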